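/- Let ρ₀ be a d×d complex density matrix that is not positive definite (i.e. ρ₀ does not have full rank). Then there exist a d×d density matrix ρ₁ and a d×d complex matrix P with 0 ≤ P ≤ 1 in the Loewner order (both P and 1 − P positive semidefinite) such that trace(P·ρ₀) = 0 and trace(P·ρ₁) = 1. That is, quantum theory satisfies Perfect State Discrimination: every non-internal normalized state can be perfectly distinguished from some other state. -/

import Mathlib

open Matrix
open scoped ComplexOrder

lemma vmv_mul_vmv {d : ℕ} (v w x y : Fin d → ℂ) :
    vecMulVec v w * vecMulVec x y = (w ⬝ᵥ x) • vecMulVec v y := by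
  ext i j
  simp [mul_apply, vecMulVec_apply, dotProduct, Finset.sum_mul, Finset.mul_sum]
  congr 1; ext k; ring

lemma vmv_hermitian {d : ℕ} (v : Fin d → ℂ) :
    (vecMulVec v (star v))ᴴ = vecMulVec v (star v) := by
  ext i j
  simp [conjTranspose_apply, vecMulVec_apply, mul_comm]

theorem stmt8 (d : ℕ) (ρ₀ : Matrix (Fin d) (Fin d) ℂ)
    (hpsd : ρ₀.PosSemidef) (htr : ρ₀.trace = 1) (hnd : ¬ ρ₀.PosDef) :
    ∃ (ρ₁ P : Matrix (Fin d) (Fin d) ℂ),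
      ρ₁.PosSemidef ∧ ρ₁.trace = 1 ∧
      P.PosSemidef ∧ (1 - P).PosSemidef ∧
      (P * ρ₀).trace = 0 ∧ (P * ρ₁).trace = 1 := by
  -- get a nonzero kernel vector
  have hker : ∃ v : Fin d → ℂ, v ≠ 0 ∧ ρ₀ *ᵥ v = 0 := by
    rw [Matrix.posDef_iff_dotProduct_mulVec, not_and] at hnd
    push_neg at hnd
    obtain ⟨v, hv, hlt⟩ := hnd hpsd.isHermitian
    have h0 : star v ⬝ᵥ ρ₀ *ᵥ v = 0 := by
      rcases (hpsd.dotProduct_mulVec_nonneg v).lt_or_eq with h | h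
      · exact absurd h hlt
      · exact h.symm
    exact ⟨v, hv, (hpsd.dotProduct_mulVec_zero_iff v).mp h0⟩
  obtain ⟨v, hv, hvk⟩ := hker
  set c : ℂ := star v ⬝ᵥ v with hc
  have hc0 : c ≠ 0 := fun h => hv (dotProduct_star_self_eq_zero.mp h)
  have hcstar : star c = c := by
    simp [hc, dotProduct, Finset.sum_comm, mul_comm]
  set P : Matrix (Fin d) (Fin d) ℂ := c⁻¹ • vecMulVec v (star v) with hP
  have hherm : Pᴴ = P := by
    rw [hP, conjTranspose_smul, vmv_hermitian, star_inv₀, hcstar]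
  have hidem : P * P = P := by
    rw [hP, smul_mul_smul_comm, vmv_mul_vmv, ← hc, smul_smul]
    congr 1
    field_simp
  have hPpsd : P.PosSemidef := by
    have := posSemidef_conjTranspose_mul_self P
    rwa [hherm, hidem] at this
  have hQpsd : (1 - P).PosSemidef := by
    have h2 : (1 - P) * (1 - P) = 1 - P := by
      simp [sub_mul, mul_sub, hidem]
    have := posSemidef_conjTranspose_mul_self (1 - P)
    rwa [conjTranspose_sub, conjTranspose_one, hherm, h2] at this
  have htrP : P.trace = 1 := by
    rw [hP, trace_smul, smul_eq_mul]
    have : (vecMulVec v (star v)).trace = c := by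
      simp [trace, vecMulVec_apply, hc, dotProduct, diag, mul_comm]
    rw [this]
    field_simp
  refine ⟨P, P, hPpsd, htrP, hPpsd, hQpsd, ?_, by rw [hidem, htrP]⟩
  -- trace (P * ρ₀) = 0
  have : vecMulVec v (star v) * ρ₀ = vecMulVec v (star v ᵥ* ρ₀) := by
    ext i j
    simp [mul_apply, vecMulVec_apply, vecMul, dotProduct, Finset.mul_sum, mul_assoc]
  rw [hP, smul_mul, this, trace_smul]
  have hvm : star v ᵥ* ρ₀ = star (ρ₀ *ᵥ v) := by
    nth_rewrite 1 [← hpsd.isHermitian.eq]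
    rw [vecMul_conjTranspose, star_star]
  have : (vecMulVec v (star v ᵥ* ρ₀)).trace = 0 := by
    rw [hvm, hvk]
    simp [trace, vecMulVec_apply, diag]
  rw [this, smul_zero]
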